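/- Let ℓ be an odd prime and let 1 ≤ a < d be coprime integers. Define δ_{d,a} := A · c(d,a) · R(d,a), where c(d,a) equals: (1/2)(3 + 1/(ℓ²−ℓ−1)) if ℓ ∤ d and 4 ∤ d; 1 + 1/(ℓ²−ℓ−1) if ℓ ∤ d, 4 | d and a ≡ 1 (mod 4); 1 if ℓ | d, 4 ∤ d and (a/ℓ) = 1; 2 if (4 | d and a ≡ 3 (mod 4)) or (ℓ | d and (a/ℓ) = −1); and 0 if 4ℓ | d, (a/ℓ) = 1 and a ≡ 1 (mod 4). Then the following strict upper bounds hold: δ_{d,a} < (1/4)(3 − 2/(ℓ(ℓ−1))) if ℓ ∤ d and 4 ∤ d; δ_{d,a} < 1/2 if ℓ ∤ d, 4 | d and a ≡ 1 (mod 4); δ_{d,a} < 1/3 if ℓ = 3, 3 | d, 4 ∤ d and a ≡ 1 (mod 3); δ_{d,a} < 1/2 if ℓ | d, ℓ > 3, 4 ∤ d and (a/ℓ) = 1; δ_{d,a} < 1 if 4 | d and a ≡ 3 (mod 4); δ_{d,a} < 1 if ℓ | d and (a/ℓ) = −1; and δ_{d,a} = 0 in the remaining case (4ℓ | d, (a/ℓ)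 = 1, a ≡ 1 (mod 4)). Moreover, each of these upper bounds is sharp: for each of the six cases and every ε > 0 there exist coprime integers 1 ≤ a < d in that case with δ_{d,a} greater than the stated bound minus ε. -/

import Mathlib

open scoped BigOperators

/-- The Artin constant `A = ∏_p (1 - 1/(p(p-1)))`, the product over all primes. -/
noncomputable def artinConstant : ℝ :=
  ∏' p : Nat.Primes, (1 - 1 / (((p : ℕ) : ℝ) * (((p : ℕ) : ℝ) - 1)))

/-- `R(d,a) = ∏_{p | gcd(a-1,d)} (1 - 1/p) ⬝ ∏_{p | d} (1 + 1/(p²-p-1))`,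
products over primes. -/
noncomputable def Rda (d a : ℕ) : ℝ :=
  (∏ p ∈ (Nat.gcd (a - 1) d).primeFactors, (1 - 1 / (p : ℝ))) *
    ∏ p ∈ d.primeFactors, (1 + 1 / ((p : ℝ) ^ 2 - (p : ℝ) - 1))

/-- The factor `c(d,a)` from Theorem `thm-ap`. `(·/·)` is the Jacobi symbol. -/
noncomputable def cGen (ℓ d a : ℕ) : ℝ :=
  if ¬ ℓ ∣ d ∧ ¬ 4 ∣ d then (3 + 1 / ((ℓ : ℝ) ^ 2 - (ℓ : ℝ) - 1)) / 2
  else if ¬ ℓ ∣ d ∧ 4 ∣ d ∧ a % 4 = 1 then 1 + 1 / ((ℓ : ℝ) ^ 2 - (ℓ : ℝ) - 1)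
  else if ℓ ∣ d ∧ ¬ 4 ∣ d ∧ jacobiSym (a : ℤ) ℓ = 1 then 1
  else if (4 ∣ d ∧ a % 4 = 3) ∨ (ℓ ∣ d ∧ jacobiSym (a : ℤ) ℓ = -1) then 2
  else 0

/-- `δ_{d,a} = A·c(d,a)·R(d,a)`. -/
noncomputable def deltaDA (ℓ d a : ℕ) : ℝ := artinConstant * cGen ℓ d a * Rda d a

open Finset

section ArtinInfra

noncomputable def fpr (p : ℕ) : ℝ := 1 - 1 / ((p : ℝ) * ((p : ℝ) - 1))

noncomputable def unat (n : ℕ) : ℝ := 1 / ((n : ℝ) * ((n : ℝ) - 1))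

lemma fpr_eq (p : ℕ) : fpr p = 1 - unat p := rfl

lemma prime_two_le_real {p : ℕ} (hp : p.Prime) : (2 : ℝ) ≤ (p : ℝ) := by
  exact_mod_cast hp.two_le

lemma unat_nonneg (n : ℕ) : 0 ≤ unat n := by
  unfold unat
  rcases n with _ | _ | k
  · norm_num
  · norm_num
  · have h : (2 : ℝ) ≤ ((k + 2 : ℕ) : ℝ) := by push_cast; linarith [Nat.cast_nonneg (α := ℝ) k]
    have h2 : (0 : ℝ) < ((k + 2 : ℕ) : ℝ) * (((k + 2 : ℕ) : ℝ) - 1) := by nlinarith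
    positivity

lemma unat_le_half {p : ℕ} (hp : p.Prime) : unat p ≤ 1 / 2 := by
  have h := prime_two_le_real hp
  have h2 : (2 : ℝ) ≤ (p : ℝ) * ((p : ℝ) - 1) := by nlinarith
  have h3 : (0 : ℝ) < (p : ℝ) * ((p : ℝ) - 1) := by linarith
  unfold unat
  rw [div_le_div_iff₀ h3 (by norm_num)]
  linarith

lemma fpr_pos {p : ℕ} (hp : p.Prime) : 0 < fpr p := by
  have := unat_le_half hp
  rw [fpr_eq]; linarith

lemma fpr_lt_one {p : ℕ} (hp : p.Prime) : fpr p < 1 := by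
  have h := prime_two_le_real hp
  have h3 : (0 : ℝ) < (p : ℝ) * ((p : ℝ) - 1) := by nlinarith
  have : 0 < unat p := by unfold unat; positivity
  rw [fpr_eq]; linarith

lemma fpr_le_one {p : ℕ} (hp : p.Prime) : fpr p ≤ 1 := (fpr_lt_one hp).le

lemma fpr_mul_g {p : ℕ} (hp : p.Prime) :
    fpr p * (1 + 1 / ((p : ℝ) ^ 2 - (p : ℝ) - 1)) = 1 := by
  have h := prime_two_le_real hp
  have h1 : (p : ℝ) * ((p : ℝ) - 1) ≠ 0 := by nlinarith
  have h2 : (p : ℝ) ^ 2 - (p : ℝ) - 1 ≠ 0 := by nlinarith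
  have h4 : (p : ℝ) - 1 ≠ 0 := by linarith
  have h5 : (p : ℝ) * ((p : ℝ) - 1) - 1 ≠ 0 := by nlinarith
  unfold fpr
  field_simp
  ring

lemma fpr_two : fpr 2 = 1 / 2 := by norm_num [fpr]

lemma sum_range_unat (n : ℕ) : ∑ i ∈ Finset.range n, unat i ≤ 1 := by
  have aux : ∀ m : ℕ, ∑ i ∈ Finset.range (m + 2), unat i = 1 - 1 / ((m : ℝ) + 1) := by
    intro m
    induction m with
    | zero => simp [Finset.sum_range_succ, unat]
    | succ k ih =>
      rw [show k + 1 + 2 = (k + 2) + 1 from rfl, Finset.sum_range_succ, ih]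
      have h1 : ((k : ℝ) + 1) ≠ 0 := by positivity
      have h2 : ((k : ℝ) + 2) ≠ 0 := by positivity
      unfold unat
      push_cast
      have h3 : ((k:ℝ) + 2) * ((k:ℝ) + 2 - 1) ≠ 0 := by nlinarith [Nat.cast_nonneg (α := ℝ) k]
      have h4 : (k:ℝ) + 2 - 1 ≠ 0 := by linarith [Nat.cast_nonneg (α := ℝ) k]
      have h5 : (k:ℝ) + 1 + 1 ≠ 0 := by linarith [Nat.cast_nonneg (α := ℝ) k]
      field_simp
      ring
  rcases n with _ | _ | m
  · simp
  · simp [unat]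
  · rw [aux m]
    have : 0 < (m : ℝ) + 1 := by positivity
    have : 0 < 1 / ((m : ℝ) + 1) := by positivity
    linarith

lemma sum_unat_le (s : Finset ℕ) : ∑ i ∈ s, unat i ≤ 1 := by
  obtain ⟨N, hN⟩ := s.exists_nat_subset_range
  calc ∑ i ∈ s, unat i ≤ ∑ i ∈ Finset.range N, unat i :=
        Finset.sum_le_sum_of_subset_of_nonneg hN (fun i _ _ => unat_nonneg i)
    _ ≤ 1 := sum_range_unat N

lemma exp_le_fpr {p : ℕ} (hp : p.Prime) : Real.exp (-(2 * unat p)) ≤ fpr p := by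
  have h0 := unat_nonneg p
  have h2 := unat_le_half hp
  have h := Real.add_one_le_exp (2 * unat p)
  have hpos : (0 : ℝ) < Real.exp (2 * unat p) := Real.exp_pos _
  rw [Real.exp_neg, fpr_eq, inv_le_iff_one_le_mul₀ hpos]
  nlinarith

lemma prod_fpr_ge (t : Finset ℕ) (ht : ∀ p ∈ t, p.Prime) :
    Real.exp (-2) ≤ ∏ p ∈ t, fpr p := by
  calc Real.exp (-2) ≤ Real.exp (∑ p ∈ t, -(2 * unat p)) := by
        rw [Real.exp_le_exp]
        have : ∑ p ∈ t, -(2 * unat p) = -(2 * ∑ p ∈ t, unat p) := by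
          simp [Finset.mul_sum]
        rw [this]
        have := sum_unat_le t
        linarith
    _ = ∏ p ∈ t, Real.exp (-(2 * unat p)) := by rw [Real.exp_sum]
    _ ≤ ∏ p ∈ t, fpr p :=
        Finset.prod_le_prod (fun p _ => (Real.exp_pos _).le) (fun p hp => exp_le_fpr (ht p hp))

lemma prod_fpr_pos (t : Finset ℕ) (ht : ∀ p ∈ t, p.Prime) : 0 < ∏ p ∈ t, fpr p :=
  Finset.prod_pos fun p hp => fpr_pos (ht p hp)

lemma prod_fpr_le_one (t : Finset ℕ) (ht : ∀ p ∈ t, p.Prime) : ∏ p ∈ t, fpr p ≤ 1 :=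
  Finset.prod_le_one (fun p hp => (fpr_pos (ht p hp)).le) (fun p hp => fpr_le_one (ht p hp))

lemma prod_fpr_anti {s t : Finset ℕ} (hst : s ⊆ t) (ht : ∀ p ∈ t, p.Prime) :
    ∏ p ∈ t, fpr p ≤ ∏ p ∈ s, fpr p := by
  rw [← Finset.prod_sdiff hst]
  have h1 : ∏ p ∈ t \ s, fpr p ≤ 1 :=
    prod_fpr_le_one _ (fun p hp => ht p (Finset.mem_sdiff.1 hp).1)
  have h2 : 0 ≤ ∏ p ∈ s, fpr p := (prod_fpr_pos s (fun p hp => ht p (hst hp))).le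
  nlinarith [prod_fpr_pos (t \ s) (fun p hp => ht p (Finset.mem_sdiff.1 hp).1)]

noncomputable def pprod (t : Finset Nat.Primes) : ℝ := ∏ p ∈ t, fpr (p : ℕ)

lemma pprod_eq (t : Finset Nat.Primes) :
    pprod t = ∏ p ∈ t.image (fun p : Nat.Primes => (p : ℕ)), fpr p := by
  rw [Finset.prod_image (fun x _ y _ h => (Nat.Primes.coe_nat_inj x y).mp h)]
  rfl

lemma pprod_image_primes (t : Finset Nat.Primes) :
    ∀ p ∈ t.image (fun p : Nat.Primes => (p : ℕ)), p.Prime := by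
  intro p hp
  obtain ⟨q, _, rfl⟩ := Finset.mem_image.1 hp
  exact q.2

lemma pprod_anti : Antitone pprod := by
  intro s t hst
  rw [pprod_eq, pprod_eq]
  exact prod_fpr_anti (Finset.image_subset_image hst) (pprod_image_primes t)

lemma pprod_bdd : BddBelow (Set.range pprod) := by
  refine ⟨0, fun x hx => ?_⟩
  obtain ⟨t, rfl⟩ := hx
  rw [pprod_eq]
  exact (prod_fpr_pos _ (pprod_image_primes t)).le

lemma hasProd_fpr : HasProd (fun p : Nat.Primes => fpr (p : ℕ)) (⨅ t, pprod t) :=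
  tendsto_atTop_ciInf pprod_anti pprod_bdd

lemma artin_eq : artinConstant = ⨅ t, pprod t := hasProd_fpr.tprod_eq

lemma artin_le (t : Finset ℕ) (ht : ∀ p ∈ t, p.Prime) :
    artinConstant ≤ ∏ p ∈ t, fpr p := by
  rw [artin_eq]
  have : ∏ p ∈ t, fpr p = pprod (t.subtype Nat.Prime) := by
    unfold pprod
    exact (Finset.prod_subtype_of_mem (fun p => fpr p) ht).symm
  rw [this]
  exact ciInf_le pprod_bdd _

lemma artin_pos : 0 < artinConstant := by
  rw [artin_eq]
  have h : Real.exp (-2) ≤ ⨅ t, pprod t := by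
    apply le_ciInf
    intro t
    rw [pprod_eq]
    exact prod_fpr_ge _ (pprod_image_primes t)
  linarith [Real.exp_pos (-2)]

lemma exists_good {ε : ℝ} (hε : 0 < ε) (m : Finset ℕ) (hm : ∀ p ∈ m, p.Prime) :
    ∃ s : Finset ℕ, (∀ p ∈ s, p.Prime) ∧ m ⊆ s ∧ ∏ p ∈ s, fpr p < artinConstant + ε := by
  have h : ⨅ t, pprod t < artinConstant + ε := by rw [← artin_eq]; linarith
  obtain ⟨t₀, ht₀⟩ := exists_lt_of_ciInf_lt h
  refine ⟨t₀.image (fun p : Nat.Primes => (p : ℕ)) ∪ m, ?_, Finset.subset_union_right, ?_⟩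
  · intro p hp
    rcases Finset.mem_union.1 hp with h' | h'
    · exact pprod_image_primes t₀ p h'
    · exact hm p h'
  · calc ∏ p ∈ _ ∪ m, fpr p ≤ ∏ p ∈ t₀.image (fun p : Nat.Primes => (p : ℕ)), fpr p := by
          apply prod_fpr_anti Finset.subset_union_left
          intro p hp
          rcases Finset.mem_union.1 hp with h' | h'
          · exact pprod_image_primes t₀ p h'
          · exact hm p h'
      _ = pprod t₀ := (pprod_eq t₀).symm
      _ < artinConstant + ε := ht₀

/-- inverse of finite product of fpr over prime factors -/
noncomputable def gpart (d : ℕ) : ℝ := ∏ p ∈ d.primeFactors, (1 + 1 / ((p : ℝ) ^ 2 - (p : ℝ) - 1))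

lemma gpart_eq (d : ℕ) : gpart d = (∏ p ∈ d.primeFactors, fpr p)⁻¹ := by
  rw [← Finset.prod_inv_distrib]
  apply Finset.prod_congr rfl
  intro p hp
  have hp' := Nat.prime_of_mem_primeFactors hp
  exact eq_inv_of_mul_eq_one_left (by rw [mul_comm]; exact fpr_mul_g hp')

lemma gpart_pos (d : ℕ) : 0 < gpart d := by
  rw [gpart_eq]
  exact inv_pos.2 (prod_fpr_pos _ (fun p hp => Nat.prime_of_mem_primeFactors hp))

/-- The master strict upper bound. -/
lemma master (d : ℕ) (hd : d ≠ 0) (Q : Finset ℕ) (hQ : ∀ q ∈ Q, q.Prime)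
    (hQd : ∀ q ∈ Q, ¬ q ∣ d) :
    artinConstant * gpart d < ∏ q ∈ Q, fpr q := by
  obtain ⟨q₀, hq₀p, hq₀⟩ := Nat.infinite_setOf_prime.exists_notMem_finset (Q ∪ d.primeFactors)
  have hq₀Q : q₀ ∉ Q := fun h => hq₀ (Finset.mem_union_left _ h)
  have hq₀d : q₀ ∉ d.primeFactors := fun h => hq₀ (Finset.mem_union_right _ h)
  have hdisj : Disjoint Q d.primeFactors := by
    rw [Finset.disjoint_left]
    intro q hq hq'
    exact hQd q hq (Nat.dvd_of_mem_primeFactors hq')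
  have hins : q₀ ∉ Q ∪ d.primeFactors := hq₀
  have hprimes : ∀ p ∈ insert q₀ (Q ∪ d.primeFactors), p.Prime := by
    intro p hp
    rcases Finset.mem_insert.1 hp with rfl | hp
    · exact hq₀p
    · rcases Finset.mem_union.1 hp with h | h
      · exact hQ p h
      · exact Nat.prime_of_mem_primeFactors h
  have hA := artin_le _ hprimes
  rw [Finset.prod_insert hins, Finset.prod_union hdisj] at hA
  have hpfpos : 0 < ∏ p ∈ d.primeFactors, fpr p :=
    prod_fpr_pos _ (fun p hp => Nat.prime_of_mem_primeFactors hp)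
  have hQpos : 0 < ∏ q ∈ Q, fpr q := prod_fpr_pos _ hQ
  have h1 : artinConstant * gpart d ≤ fpr q₀ * ∏ q ∈ Q, fpr q := by
    rw [gpart_eq]
    calc artinConstant * (∏ p ∈ d.primeFactors, fpr p)⁻¹
        ≤ (fpr q₀ * ((∏ q ∈ Q, fpr q) * ∏ p ∈ d.primeFactors, fpr p)) *
            (∏ p ∈ d.primeFactors, fpr p)⁻¹ := by
          apply mul_le_mul_of_nonneg_right hA (by positivity)
      _ = fpr q₀ * ∏ q ∈ Q, fpr q := by
          field_simp
  calc artinConstant * gpart d ≤ fpr q₀ * ∏ q ∈ Q, fpr q := h1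
    _ < 1 * ∏ q ∈ Q, fpr q := by
        apply mul_lt_mul_of_pos_right (fpr_lt_one hq₀p) hQpos
    _ = ∏ q ∈ Q, fpr q := one_mul _

/-- the G part -/
noncomputable def gden (a d : ℕ) : ℝ := ∏ p ∈ (Nat.gcd (a - 1) d).primeFactors, (1 - 1 / (p : ℝ))

lemma Rda_eq (d a : ℕ) : Rda d a = gden a d * gpart d := rfl

lemma gfac_pos {p : ℕ} (hp : p.Prime) : 0 < 1 - 1 / (p : ℝ) := by
  have h : (2 : ℝ) ≤ (p : ℝ) := by exact_mod_cast hp.two_le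
  have : 1 / (p : ℝ) ≤ 1 / 2 := by
    rw [div_le_div_iff₀ (by linarith) (by norm_num)]; linarith
  linarith

lemma gfac_le_one {p : ℕ} (hp : p.Prime) : 1 - 1 / (p : ℝ) ≤ 1 := by
  have h : (2 : ℝ) ≤ (p : ℝ) := by exact_mod_cast hp.two_le
  have : 0 < 1 / (p : ℝ) := by positivity
  linarith

lemma gden_pos (a d : ℕ) : 0 < gden a d :=
  Finset.prod_pos fun p hp => gfac_pos (Nat.prime_of_mem_primeFactors hp)

lemma gden_le (a d : ℕ) (s : Finset ℕ) (hs : s ⊆ (Nat.gcd (a - 1) d).primeFactors) :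
    gden a d ≤ ∏ p ∈ s, (1 - 1 / (p : ℝ)) := by
  unfold gden
  rw [← Finset.prod_sdiff hs]
  have h1 : ∏ p ∈ (Nat.gcd (a - 1) d).primeFactors \ s, (1 - 1 / (p : ℝ)) ≤ 1 :=
    Finset.prod_le_one
      (fun p hp => (gfac_pos (Nat.prime_of_mem_primeFactors (Finset.mem_sdiff.1 hp).1)).le)
      (fun p hp => gfac_le_one (Nat.prime_of_mem_primeFactors (Finset.mem_sdiff.1 hp).1))
  have h2 : 0 < ∏ p ∈ s, (1 - 1 / (p : ℝ)) :=
    Finset.prod_pos fun p hp => gfac_pos (Nat.prime_of_mem_primeFactors (hs hp))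
  nlinarith

lemma gden_le_one (a d : ℕ) : gden a d ≤ 1 := by
  have := gden_le a d ∅ (Finset.empty_subset _)
  simpa using this

lemma mem_pf_gcd {p a d : ℕ} (hp : p.Prime) (h1 : p ∣ a - 1) (h2 : p ∣ d) (hd : d ≠ 0) :
    p ∈ (Nat.gcd (a - 1) d).primeFactors :=
  Nat.mem_primeFactors.2 ⟨hp, Nat.dvd_gcd h1 h2, fun h => hd (Nat.eq_zero_of_gcd_eq_zero_right h)⟩

lemma gden_le_half {a d : ℕ} (hd : d ≠ 0) (h2d : 2 ∣ d) (h2a : 2 ∣ a - 1) :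
    gden a d ≤ 1 / 2 := by
  have hmem := mem_pf_gcd Nat.prime_two h2a h2d hd
  have := gden_le a d {2} (Finset.singleton_subset_iff.2 hmem)
  norm_num at this
  linarith

lemma gden_le_two_thirds {a d : ℕ} (hd : d ≠ 0) (h3d : 3 ∣ d) (h3a : 3 ∣ a - 1) :
    gden a d ≤ 2 / 3 := by
  have hmem := mem_pf_gcd Nat.prime_three h3a h3d hd
  have := gden_le a d {3} (Finset.singleton_subset_iff.2 hmem)
  norm_num at this
  linarith

lemma gden_le_third {a d : ℕ} (hd : d ≠ 0) (h2d : 2 ∣ d) (h2a : 2 ∣ a - 1)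
    (h3d : 3 ∣ d) (h3a : 3 ∣ a - 1) : gden a d ≤ 1 / 3 := by
  have hmem2 := mem_pf_gcd Nat.prime_two h2a h2d hd
  have hmem3 := mem_pf_gcd Nat.prime_three h3a h3d hd
  have hsub : ({2, 3} : Finset ℕ) ⊆ (Nat.gcd (a - 1) d).primeFactors := by
    intro x hx
    rcases Finset.mem_insert.1 hx with rfl | hx
    · exact hmem2
    · rw [Finset.mem_singleton.1 hx]; exact hmem3
  have := gden_le a d {2, 3} hsub
  have heval : ∏ p ∈ ({2, 3} : Finset ℕ), (1 - 1 / (p : ℝ)) = 1 / 3 := by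
    rw [Finset.prod_insert (by norm_num), Finset.prod_singleton]
    norm_num
  rw [heval] at this
  exact this

lemma delta_eq (ℓ d a : ℕ) :
    deltaDA ℓ d a = cGen ℓ d a * gden a d * (artinConstant * gpart d) := by
  unfold deltaDA
  rw [Rda_eq]
  ring

lemma ell_facts {ℓ : ℕ} (hℓ : ℓ.Prime) (hodd : Odd ℓ) :
    (3 : ℝ) ≤ (ℓ : ℝ) ∧ (0:ℝ) < (ℓ:ℝ)^2 - (ℓ:ℝ) - 1 ∧ (0:ℝ) < (ℓ:ℝ) * ((ℓ:ℝ) - 1) := by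
  have h2 : 2 ≤ ℓ := hℓ.two_le
  have hne : ℓ ≠ 2 := by rintro rfl; exact (Nat.not_odd_iff_even.2 (by decide)) hodd
  have h3 : 3 ≤ ℓ := by omega
  have hL : (3 : ℝ) ≤ (ℓ : ℝ) := by exact_mod_cast h3
  refine ⟨hL, by nlinarith, by nlinarith⟩

lemma cI_pos {ℓ : ℕ} (hℓ : ℓ.Prime) (hodd : Odd ℓ) :
    0 < (3 + 1 / ((ℓ : ℝ) ^ 2 - (ℓ : ℝ) - 1)) / 2 := by
  obtain ⟨_, h2, _⟩ := ell_facts hℓ hodd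
  positivity

lemma cI_id {ℓ : ℕ} (hℓ : ℓ.Prime) (hodd : Odd ℓ) :
    (3 + 1 / ((ℓ : ℝ) ^ 2 - (ℓ : ℝ) - 1)) / 2 * (1 / 2) * fpr ℓ
      = (3 - 2 / ((ℓ : ℝ) * ((ℓ : ℝ) - 1))) / 4 := by
  obtain ⟨hL, h2, h3⟩ := ell_facts hℓ hodd
  have h4 : (ℓ : ℝ) - 1 ≠ 0 := by linarith
  have h5 : (ℓ : ℝ) * ((ℓ : ℝ) - 1) - 1 ≠ 0 := by nlinarith
  unfold fpr
  field_simp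
  ring

lemma cII_eq {ℓ : ℕ} (hℓ : ℓ.Prime) :
    1 + 1 / ((ℓ : ℝ) ^ 2 - (ℓ : ℝ) - 1) = (fpr ℓ)⁻¹ :=
  eq_inv_of_mul_eq_one_left (by rw [mul_comm]; exact fpr_mul_g hℓ)

lemma coprime_odd {a d : ℕ} (hcop : a.Coprime d) (h2d : 2 ∣ d) : 2 ∣ a - 1 := by
  have h2a : ¬ 2 ∣ a := by
    intro h
    have h' := Nat.dvd_gcd h h2d
    rw [Nat.Coprime] at hcop
    rw [hcop] at h'
    omega
  omega

lemma bound_helper {c G M t u : ℝ} (hc : 0 < c) (hG0 : 0 < G) (hGt : G ≤ t)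
    (ht : 0 < t) (hM : 0 < M) (hMu : M < u) : c * G * M < c * t * u := by
  have h1 : c * G * M ≤ c * t * M := by
    nlinarith [mul_le_mul_of_nonneg_left hGt (mul_pos hc hM).le]
  have h2 : c * t * M < c * t * u := (mul_lt_mul_iff_right₀ (mul_pos hc ht)).2 hMu
  linarith

theorem upper_all (ℓ : ℕ) (hℓ : ℓ.Prime) (hodd : Odd ℓ) (a d : ℕ) (ha : 1 ≤ a)
    (had : a < d) (hcop : a.Coprime d) :
      (¬ ℓ ∣ d → ¬ 4 ∣ d →
        deltaDA ℓ d a < (3 - 2 / ((ℓ : ℝ) * ((ℓ : ℝ) - 1))) / 4) ∧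
      (¬ ℓ ∣ d → 4 ∣ d → a % 4 = 1 → deltaDA ℓ d a < 1 / 2) ∧
      (ℓ = 3 → 3 ∣ d → ¬ 4 ∣ d → a % 3 = 1 → deltaDA ℓ d a < 1 / 3) ∧
      (ℓ ∣ d → 3 < ℓ → ¬ 4 ∣ d → jacobiSym (a : ℤ) ℓ = 1 →
        deltaDA ℓ d a < 1 / 2) ∧
      (4 ∣ d → a % 4 = 3 → deltaDA ℓ d a < 1) ∧
      (ℓ ∣ d → jacobiSym (a : ℤ) ℓ = -1 → deltaDA ℓ d a < 1) ∧
      (4 * ℓ ∣ d → jacobiSym (a : ℤ) ℓ = 1 → a % 4 = 1 → deltaDA ℓ d a = 0) := by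
  have hd0 : d ≠ 0 := by omega
  have hℓ2 : ℓ ≠ 2 := by rintro rfl; exact (Nat.not_odd_iff_even.2 (by decide)) hodd
  set M := artinConstant * gpart d with hMdef
  have hM : 0 < M := mul_pos artin_pos (gpart_pos d)
  have hG0 : 0 < gden a d := gden_pos a d
  have hG1 : gden a d ≤ 1 := gden_le_one a d
  have hMone : M < 1 := by
    have := master d hd0 ∅ (by simp) (by simp)
    simpa using this
  have hMfpr2 : ¬ 2 ∣ d → M < 1 / 2 := by
    intro h2d
    have := master d hd0 {2} (by simp [Nat.prime_two]) (by simpa using h2d)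
    simpa [fpr_two] using this
  refine ⟨?_, ?_, ?_, ?_, ?_, ?_, ?_⟩
  -- Case I
  · intro hld h4d
    have hc : cGen ℓ d a = (3 + 1 / ((ℓ : ℝ) ^ 2 - (ℓ : ℝ) - 1)) / 2 := by
      unfold cGen; rw [if_pos ⟨hld, h4d⟩]
    set c := (3 + 1 / ((ℓ : ℝ) ^ 2 - (ℓ : ℝ) - 1)) / 2 with hcdef
    have hc0 : 0 < c := cI_pos hℓ hodd
    have hfℓ : 0 < fpr ℓ := fpr_pos hℓ
    rw [delta_eq, hc, ← hMdef]
    rw [← cI_id hℓ hodd]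
    by_cases h2d : 2 ∣ d
    · have hmas : M < fpr ℓ := by
        have := master d hd0 {ℓ} (by simpa using hℓ) (by simpa using hld)
        simpa using this
      have hGh : gden a d ≤ 1 / 2 := gden_le_half hd0 h2d (coprime_odd hcop h2d)
      rw [← hcdef]
      exact bound_helper hc0 hG0 hGh one_half_pos hM hmas
    · have hmas : M < 1 / 2 * fpr ℓ := by
        have hne : (2:ℕ) ≠ ℓ := fun h => hℓ2 h.symm
        have := master d hd0 {2, ℓ} ?_ ?_
        · rw [Finset.prod_insert (by simpa using hne), Finset.prod_singleton, fpr_two] at this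
          simpa using this
        · intro q hq
          rcases Finset.mem_insert.1 hq with rfl | hq
          · exact Nat.prime_two
          · rw [Finset.mem_singleton.1 hq]; exact hℓ
        · intro q hq
          rcases Finset.mem_insert.1 hq with rfl | hq
          · exact h2d
          · rw [Finset.mem_singleton.1 hq]; exact hld
      rw [← hcdef]
      nlinarith [bound_helper hc0 hG0 hG1 one_pos hM hmas]
  -- Case II
  · intro hld h4d ha4
    have hc : cGen ℓ d a = 1 + 1 / ((ℓ : ℝ) ^ 2 - (ℓ : ℝ) - 1) := by
      unfold cGen
      rw [if_neg (fun h => h.2 h4d), if_pos ⟨hld, h4d, ha4⟩]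
    have hfℓ : 0 < fpr ℓ := fpr_pos hℓ
    have h2d : 2 ∣ d := dvd_trans (by norm_num) h4d
    have hGh : gden a d ≤ 1 / 2 := gden_le_half hd0 h2d (coprime_odd hcop h2d)
    have hmas : M < fpr ℓ := by
      have := master d hd0 {ℓ} (by simpa using hℓ) (by simpa using hld)
      simpa using this
    rw [delta_eq, hc, cII_eq hℓ, ← hMdef]
    have hkey : (fpr ℓ)⁻¹ * gden a d * M < (fpr ℓ)⁻¹ * (1/2) * fpr ℓ := by
      have hinv : 0 < (fpr ℓ)⁻¹ := by positivity
      exact bound_helper hinv hG0 hGh one_half_pos hM hmas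
    calc (fpr ℓ)⁻¹ * gden a d * M < (fpr ℓ)⁻¹ * (1/2) * fpr ℓ := hkey
      _ = 1 / 2 := by field_simp
  -- Case III
  · rintro rfl h3d h4d ha3
    have hj : jacobiSym (a : ℤ) 3 = 1 := by
      rw [jacobiSym.mod_left]
      have hmod : (a : ℤ) % ((3:ℕ):ℤ) = 1 := by
        have := congrArg (Nat.cast : ℕ → ℤ) ha3
        push_cast at this
        omega
      rw [hmod]
      exact jacobiSym.one_left 3
    have hc : cGen 3 d a = 1 := by
      unfold cGen
      rw [if_neg (fun h => h.1 h3d), if_neg (fun h => h.1 h3d), if_pos ⟨h3d, h4d, hj⟩]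
    have h3a : 3 ∣ a - 1 := by omega
    rw [delta_eq, hc, ← hMdef, one_mul]
    by_cases h2d : 2 ∣ d
    · have hGh := gden_le_third hd0 h2d (coprime_odd hcop h2d) h3d h3a
      nlinarith [bound_helper one_pos hG0 hGh (by norm_num : (0:ℝ) < 1/3) hM hMone]
    · have hGh := gden_le_two_thirds hd0 h3d h3a
      have hmas := hMfpr2 h2d
      nlinarith [bound_helper one_pos hG0 hGh (by norm_num : (0:ℝ) < 2/3) hM hmas]
  -- Case IV
  · intro hld hl3 h4d hj
    have hc : cGen ℓ d a = 1 := by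
      unfold cGen
      rw [if_neg (fun h => h.1 hld), if_neg (fun h => h.1 hld), if_pos ⟨hld, h4d, hj⟩]
    rw [delta_eq, hc, ← hMdef, one_mul]
    by_cases h2d : 2 ∣ d
    · have hGh : gden a d ≤ 1 / 2 := gden_le_half hd0 h2d (coprime_odd hcop h2d)
      nlinarith [bound_helper one_pos hG0 hGh one_half_pos hM hMone]
    · have hmas := hMfpr2 h2d
      nlinarith [bound_helper one_pos hG0 hG1 one_pos hM hmas]
  -- Case V
  · intro h4d ha4
    have hc : cGen ℓ d a = 2 := by
      unfold cGen
      rw [if_neg (fun h => h.2 h4d), if_neg (by rintro ⟨-, -, h⟩; omega),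
        if_neg (fun h => h.2.1 h4d), if_pos (Or.inl ⟨h4d, ha4⟩)]
    have h2d : 2 ∣ d := dvd_trans (by norm_num) h4d
    have h2a : 2 ∣ a - 1 := coprime_odd hcop h2d
    have hGh : gden a d ≤ 1 / 2 := gden_le_half hd0 h2d h2a
    rw [delta_eq, hc, ← hMdef]
    nlinarith [bound_helper two_pos hG0 hGh one_half_pos hM hMone]
  -- Case VI
  · intro hld hj
    have hjne : jacobiSym (a : ℤ) ℓ ≠ 1 := by rw [hj]; norm_num
    have hc : cGen ℓ d a = 2 := by
      unfold cGen
      rw [if_neg (fun h => h.1 hld), if_neg (fun h => h.1 hld),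
        if_neg (fun h => hjne h.2.2), if_pos (Or.inr ⟨hld, hj⟩)]
    rw [delta_eq, hc, ← hMdef]
    by_cases h2d : 2 ∣ d
    · have hGh : gden a d ≤ 1 / 2 := gden_le_half hd0 h2d (coprime_odd hcop h2d)
      nlinarith [bound_helper one_pos hG0 hGh one_half_pos hM hMone]
    · have hmas := hMfpr2 h2d
      nlinarith [bound_helper one_pos hG0 hG1 one_pos hM hmas]
  -- Case VII
  · intro h4ld hj ha4
    have hld : ℓ ∣ d := dvd_trans (Dvd.intro_left 4 rfl) h4ld
    have h4d : 4 ∣ d := dvd_trans (Dvd.intro ℓ rfl) h4ld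
    have hjne : jacobiSym (a : ℤ) ℓ ≠ -1 := by rw [hj]; norm_num
    have hc : cGen ℓ d a = 0 := by
      unfold cGen
      rw [if_neg (fun h => h.1 hld), if_neg (fun h => h.1 hld),
        if_neg (fun h => h.2.1 h4d), if_neg ?_]
      rintro (⟨-, h⟩ | ⟨-, h⟩)
      · omega
      · exact hjne h
    rw [delta_eq, hc]
    ring

lemma pf_mul_prod (m₁ : ℕ) (hm₁ : m₁ ≠ 0) (t : Finset ℕ) (htp : ∀ p ∈ t, p.Prime) :
    (m₁ * ∏ p ∈ t, p).primeFactors = m₁.primeFactors ∪ t := by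
  have hP0 : (∏ p ∈ t, p) ≠ 0 :=
    (Finset.prod_pos (fun p hp => (htp p hp).pos)).ne'
  rw [Nat.primeFactors_mul hm₁ hP0, Nat.primeFactors_prod htp]

lemma construct (m₁ r : ℕ) (hm₁ : m₁ ≠ 0) (hr0 : r ≠ 0) (hrm : r < m₁)
    (hcop : Nat.Coprime r m₁) (t : Finset ℕ) (htp : ∀ p ∈ t, p.Prime)
    (htm : ∀ p ∈ t, ¬ p ∣ m₁) (ht2 : 2 ∉ t) (htne : t.Nonempty) :
    ∃ a : ℕ, 1 ≤ a ∧ a < m₁ * ∏ p ∈ t, p ∧ a.Coprime (m₁ * ∏ p ∈ t, p) ∧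
      a % m₁ = r ∧ (∀ p ∈ t, a % p = 2) ∧
      (∀ q : ℕ, q ∈ (Nat.gcd (a - 1) (m₁ * ∏ p ∈ t, p)).primeFactors ↔
        (q.Prime ∧ q ∣ m₁ ∧ q ∣ a - 1)) := by
  set P := ∏ p ∈ t, p with hPdef
  have hP0 : P ≠ 0 := (Finset.prod_pos (fun p hp => (htp p hp).pos)).ne'
  have ht3 : ∀ p ∈ t, 3 ≤ p := by
    intro p hp
    have := (htp p hp).two_le
    have : p ≠ 2 := fun h => ht2 (h ▸ hp)
    omega
  have hcopmP : Nat.Coprime m₁ P := by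
    apply Nat.Coprime.prod_right
    intro p hp
    exact ((htp p hp).coprime_iff_not_dvd.2 (htm p hp)).symm
  obtain ⟨k, hk₁, hk₂⟩ := Nat.chineseRemainder hcopmP r 2
  set d := m₁ * P with hddef
  have hd0 : d ≠ 0 := mul_ne_zero hm₁ hP0
  have hdpos : 0 < d := Nat.pos_of_ne_zero hd0
  set a := k % d with hadef
  have ham : a % m₁ = r := by
    have h1 : a % m₁ = k % m₁ := Nat.mod_mod_of_dvd k (dvd_mul_right m₁ P)
    rw [h1, hk₁, Nat.mod_eq_of_lt hrm]
  have hap : ∀ p ∈ t, a % p = 2 := by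
    intro p hp
    have hpd : p ∣ d := (Finset.dvd_prod_of_mem _ hp).trans (dvd_mul_left P m₁)
    have h1 : a % p = k % p := Nat.mod_mod_of_dvd k hpd
    have h2 : k % p = 2 % p :=
      (Nat.ModEq.of_dvd (Finset.dvd_prod_of_mem _ hp) hk₂)
    rw [h1, h2, Nat.mod_eq_of_lt (by have := ht3 p hp; omega)]
  have ha1 : 1 ≤ a := by
    rcases Nat.eq_zero_or_pos a with h | h
    · exfalso; rw [h] at ham; simp at ham; omega
    · exact h
  obtain ⟨p₀, hp₀⟩ := htne
  have ha2 : 2 ≤ a := by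
    rcases Nat.lt_or_ge a 2 with h | h
    · exfalso
      have ha' : a = 1 := by omega
      have hm := hap p₀ hp₀
      have h3 := ht3 p₀ hp₀
      rw [ha', Nat.mod_eq_of_lt (by omega : 1 < p₀)] at hm
      omega
    · exact h
  have halt : a < d := Nat.mod_lt k hdpos
  have hmod_ne_dvd : ∀ q ∈ t, ¬ q ∣ a := by
    intro q hqt hdvd
    have h2 := hap q hqt
    have h0 : a % q = 0 := Nat.dvd_iff_mod_eq_zero.1 hdvd
    omega
  refine ⟨a, ha1, halt, ?_, ham, hap, ?_⟩
  · -- coprimality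
    by_contra h
    obtain ⟨q, hq, hqd⟩ := Nat.exists_prime_and_dvd h
    have hqa : q ∣ a := hqd.trans (Nat.gcd_dvd_left a d)
    have hqdd : q ∣ d := hqd.trans (Nat.gcd_dvd_right a d)
    rcases (Nat.Prime.dvd_mul hq).1 hqdd with hqm | hqP
    · -- q ∣ m₁, q ∣ a ⇒ q ∣ r
      have hdm : m₁ * (a / m₁) + r = a := by rw [← ham]; exact Nat.div_add_mod a m₁
      have hqr : q ∣ r := by
        have h1 : q ∣ m₁ * (a / m₁) := hqm.mul_right _
        have : q ∣ a - m₁ * (a / m₁) := Nat.dvd_sub hqa h1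
        have heq : a - m₁ * (a / m₁) = r := by omega
        rwa [heq] at this
      have : q ∣ Nat.gcd r m₁ := Nat.dvd_gcd hqr hqm
      rw [Nat.coprime_iff_gcd_eq_one.1 hcop] at this
      exact Nat.Prime.one_lt hq |>.ne' (Nat.eq_one_of_dvd_one this) |>.elim
    · obtain ⟨p, hpt, hqp⟩ := (hq.prime.dvd_finset_prod_iff _).1 hqP
      have : q = p := (Nat.prime_dvd_prime_iff_eq hq (htp p hpt)).1 hqp
      subst this
      exact hmod_ne_dvd q hpt hqa
  · -- gcd prime factor characterization
    intro q
    constructor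
    · intro hmem
      obtain ⟨hqp, hqd, -⟩ := Nat.mem_primeFactors.1 hmem
      have hqa1 : q ∣ a - 1 := hqd.trans (Nat.gcd_dvd_left _ _)
      have hqdd : q ∣ d := hqd.trans (Nat.gcd_dvd_right _ _)
      refine ⟨hqp, ?_, hqa1⟩
      rcases (Nat.Prime.dvd_mul hqp).1 hqdd with hqm | hqP
      · exact hqm
      · exfalso
        obtain ⟨p, hpt, hqp'⟩ := (hqp.prime.dvd_finset_prod_iff _).1 hqP
        have : q = p := (Nat.prime_dvd_prime_iff_eq hqp (htp p hpt)).1 hqp'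
        subst this
        -- a % q = 2 and q ∣ a - 1 : contradiction
        have hmod := hap q hpt
        have hdm : q * (a / q) + 2 = a := by rw [← hmod]; exact Nat.div_add_mod a q
        have h1 : q ∣ q * (a / q) := Dvd.intro _ rfl
        have h2 : q ∣ (a - 1) - q * (a / q) := Nat.dvd_sub hqa1 h1
        have heq : (a - 1) - q * (a / q) = 1 := by omega
        rw [heq] at h2
        exact Nat.Prime.one_lt hqp |>.ne' (Nat.eq_one_of_dvd_one h2) |>.elim
    · rintro ⟨hqp, hqm, hqa1⟩
      exact Nat.mem_primeFactors.2 ⟨hqp,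
        Nat.dvd_gcd hqa1 (hqm.trans (dvd_mul_right m₁ P)),
        fun h => hd0 (Nat.eq_zero_of_gcd_eq_zero_right h)⟩

lemma sharp_end {target ε Fs δ : ℝ} (ht0 : 0 ≤ target) (ht1 : target ≤ 1) (hε : 0 < ε)
    (hFs1 : artinConstant ≤ Fs) (hFs2 : Fs < artinConstant + ε * artinConstant)
    (hδ : δ = target * (artinConstant / Fs)) : target - ε < δ := by
  have hA := artin_pos
  have hFs0 : 0 < Fs := lt_of_lt_of_le hA hFs1
  rw [hδ]
  rw [show target * (artinConstant / Fs) = target * artinConstant / Fs by ring]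
  rw [lt_div_iff₀ hFs0]
  nlinarith [mul_pos hε hA, mul_nonneg ht0 hA.le,
    mul_le_mul_of_nonneg_right ht1 (mul_pos hε hA).le, mul_pos hε hFs0]

lemma prime_dvd_four {q : ℕ} (hq : q.Prime) (h : q ∣ 4) : q = 2 := by
  have h1 := hq.two_le
  have h2 := Nat.le_of_dvd (by norm_num) h
  interval_cases q <;> revert h hq <;> decide

lemma prime_dvd_six {q : ℕ} (hq : q.Prime) (h : q ∣ 6) : q = 2 ∨ q = 3 := by
  have h1 := hq.two_le
  have h2 := Nat.le_of_dvd (by norm_num) h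
  interval_cases q <;> revert h hq <;> decide

lemma pf_four : (4 : ℕ).primeFactors = {2} := by
  rw [show (4:ℕ) = 2 ^ 2 by norm_num, Nat.primeFactors_pow _ (by norm_num),
    Nat.Prime.primeFactors Nat.prime_two]

lemma pf_six : (6 : ℕ).primeFactors = {2, 3} := by
  rw [show (6:ℕ) = 2 * 3 by norm_num, Nat.primeFactors_mul (by norm_num) (by norm_num),
    Nat.Prime.primeFactors Nat.prime_two, Nat.Prime.primeFactors Nat.prime_three]
  rfl

lemma pf_two_ell {ℓ : ℕ} (hℓ : ℓ.Prime) (hne : ℓ ≠ 2) :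
    (2 * ℓ).primeFactors = insert 2 {ℓ} := by
  rw [Nat.primeFactors_mul (by norm_num) hℓ.ne_zero, Nat.Prime.primeFactors Nat.prime_two,
    Nat.Prime.primeFactors hℓ]
  rfl

lemma not_dvd_of_not_mem_pf {p d : ℕ} (hp : p.Prime) (hd : d ≠ 0)
    (h : p ∉ d.primeFactors) : ¬ p ∣ d := fun hdvd => h (Nat.mem_primeFactors.2 ⟨hp, hdvd, hd⟩)

lemma prime_not_dvd_prod {q : ℕ} (hq : q.Prime) (t : Finset ℕ) (htp : ∀ p ∈ t, p.Prime)
    (hqt : q ∉ t) : ¬ q ∣ ∏ p ∈ t, p := by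
  intro h
  obtain ⟨p, hpt, hqp⟩ := (hq.prime.dvd_finset_prod_iff _).1 h
  rw [(Nat.prime_dvd_prime_iff_eq hq (htp p hpt)).1 hqp] at hqt
  exact hqt hpt

lemma not_dvd_sub_one {a q b : ℕ} (hmod : a % q = b) (hb2 : 2 ≤ b) (hbq : b < q) :
    ¬ q ∣ a - 1 := by
  intro h
  have hdm : q * (a / q) + b = a := by rw [← hmod]; exact Nat.div_add_mod a q
  have h1 : q ∣ (a - 1) - q * (a / q) := Nat.dvd_sub h (Dvd.intro _ rfl)
  have heq : (a - 1) - q * (a / q) = b - 1 := by omega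
  rw [heq] at h1
  have := Nat.le_of_dvd (by omega) h1
  omega

/-- rebuild the product over `s` from the product over `t = (s.erase 2).erase ℓ`. -/
lemma prod_rebuild {s : Finset ℕ} {ℓ : ℕ} (h2 : 2 ∈ s) (hl : ℓ ∈ s) (hne : ℓ ≠ 2)
    (f : ℕ → ℝ) :
    ∏ p ∈ s, f p = f 2 * (f ℓ * ∏ p ∈ (s.erase 2).erase ℓ, f p) := by
  have h1 : ℓ ∈ s.erase 2 := Finset.mem_erase.2 ⟨hne, hl⟩
  rw [← Finset.mul_prod_erase _ _ h2, ← Finset.mul_prod_erase _ _ h1]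

lemma target_I_bounds {ℓ : ℕ} (hℓ : ℓ.Prime) (hodd : Odd ℓ) :
    0 ≤ (3 - 2 / ((ℓ : ℝ) * ((ℓ : ℝ) - 1))) / 4 ∧
      (3 - 2 / ((ℓ : ℝ) * ((ℓ : ℝ) - 1))) / 4 ≤ 1 := by
  obtain ⟨hL, h2, h3⟩ := ell_facts hℓ hodd
  have hp : 0 < 2 / ((ℓ : ℝ) * ((ℓ : ℝ) - 1)) := by positivity
  have hle : 2 / ((ℓ : ℝ) * ((ℓ : ℝ) - 1)) ≤ 1 := by
    rw [div_le_one h3]; nlinarith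
  constructor <;> nlinarith

theorem sharp_I (ℓ : ℕ) (hℓ : ℓ.Prime) (hodd : Odd ℓ) (ε : ℝ) (hε : 0 < ε) :
    ∃ a d : ℕ, 1 ≤ a ∧ a < d ∧ Nat.Coprime a d ∧ ¬ ℓ ∣ d ∧ ¬ 4 ∣ d ∧
      (3 - 2 / ((ℓ : ℝ) * ((ℓ : ℝ) - 1))) / 4 - ε < deltaDA ℓ d a := by
  have hℓ2 : ℓ ≠ 2 := by rintro rfl; exact (Nat.not_odd_iff_even.2 (by decide)) hodd
  have hq0 : (if ℓ = 3 then 5 else 3).Prime := by split <;> norm_num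
  set q₀ := if ℓ = 3 then 5 else 3 with hq₀def
  have hq₀2 : q₀ ≠ 2 := by rw [hq₀def]; split <;> norm_num
  have hq₀ℓ : q₀ ≠ ℓ := by
    rw [hq₀def]; split
    · omega
    · omega
  obtain ⟨s, hsp, hms, hFs⟩ := exists_good (mul_pos hε artin_pos)
    ({2, ℓ} ∪ {q₀}) (by
      intro p hp
      rcases Finset.mem_union.1 hp with hp | hp
      · rcases Finset.mem_insert.1 hp with rfl | hp
        · exact Nat.prime_two
        · rw [Finset.mem_singleton.1 hp]; exact hℓ
      · rw [Finset.mem_singleton.1 hp]; exact hq0)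
  have h2s : 2 ∈ s := hms (by simp)
  have hls : ℓ ∈ s := hms (by simp)
  have hq₀s : q₀ ∈ s := hms (by simp)
  set t := (s.erase 2).erase ℓ with htdef
  have htp : ∀ p ∈ t, p.Prime := fun p hp =>
    hsp p (Finset.mem_of_mem_erase (Finset.mem_of_mem_erase hp))
  have h2t : 2 ∉ t := fun h => (Finset.mem_erase.1 (Finset.mem_of_mem_erase h)).1 rfl
  have hlt : ℓ ∉ t := fun h => (Finset.mem_erase.1 h).1 rfl
  have hq₀t : q₀ ∈ t :=
    Finset.mem_erase.2 ⟨hq₀ℓ, Finset.mem_erase.2 ⟨hq₀2, hq₀s⟩⟩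
  set d := ∏ p ∈ t, p with hddef
  have hd0 : d ≠ 0 := (Finset.prod_pos (fun p hp => (htp p hp).pos)).ne'
  have hpfd : d.primeFactors = t := Nat.primeFactors_prod htp
  have h2d : ¬ 2 ∣ d := prime_not_dvd_prod Nat.prime_two t htp h2t
  have hld : ¬ ℓ ∣ d := prime_not_dvd_prod hℓ t htp hlt
  have h4d : ¬ 4 ∣ d := fun h => h2d (dvd_trans (by norm_num) h)
  have had : 2 < d := by
    have hq₀d : q₀ ∣ d := Finset.dvd_prod_of_mem _ hq₀t
    have := Nat.le_of_dvd (Nat.pos_of_ne_zero hd0) hq₀d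
    have : 3 ≤ q₀ := by rw [hq₀def]; split <;> norm_num
    omega
  have hcop : Nat.Coprime 2 d := (Nat.prime_two.coprime_iff_not_dvd).2 h2d
  refine ⟨2, d, by norm_num, had, hcop, hld, h4d, ?_⟩
  -- compute delta
  have hgden : gden 2 d = 1 := by
    unfold gden
    norm_num
  have hc : cGen ℓ d 2 = (3 + 1 / ((ℓ : ℝ) ^ 2 - (ℓ : ℝ) - 1)) / 2 := by
    unfold cGen; rw [if_pos ⟨hld, h4d⟩]
  have hFs_pos : 0 < ∏ p ∈ s, fpr p := prod_fpr_pos s hsp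
  have ht_pos : 0 < ∏ p ∈ t, fpr p := prod_fpr_pos t htp
  have hfl : 0 < fpr ℓ := fpr_pos hℓ
  have hsplit : ∏ p ∈ s, fpr p = fpr 2 * (fpr ℓ * ∏ p ∈ t, fpr p) :=
    prod_rebuild h2s hls (fun h => hℓ2 h) fpr
  have hδ : deltaDA ℓ d 2 = ((3 - 2 / ((ℓ : ℝ) * ((ℓ : ℝ) - 1))) / 4) *
      (artinConstant / ∏ p ∈ s, fpr p) := by
    rw [delta_eq, hc, hgden, gpart_eq, hpfd, ← cI_id hℓ hodd, hsplit, fpr_two]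
    field_simp
  obtain ⟨ht0, ht1⟩ := target_I_bounds hℓ hodd
  exact sharp_end ht0 ht1 hε (artin_le s hsp) hFs hδ

theorem sharp_II (ℓ : ℕ) (hℓ : ℓ.Prime) (hodd : Odd ℓ) (ε : ℝ) (hε : 0 < ε) :
    ∃ a d : ℕ, 1 ≤ a ∧ a < d ∧ Nat.Coprime a d ∧ ¬ ℓ ∣ d ∧ 4 ∣ d ∧
      a % 4 = 1 ∧ 1 / 2 - ε < deltaDA ℓ d a := by
  have hℓ2 : ℓ ≠ 2 := by rintro rfl; exact (Nat.not_odd_iff_even.2 (by decide)) hodd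
  have hq0 : (if ℓ = 3 then 5 else 3).Prime := by split <;> norm_num
  set q₀ := if ℓ = 3 then 5 else 3 with hq₀def
  have hq₀2 : q₀ ≠ 2 := by rw [hq₀def]; split <;> norm_num
  have hq₀ℓ : q₀ ≠ ℓ := by rw [hq₀def]; split <;> omega
  obtain ⟨s, hsp, hms, hFs⟩ := exists_good (mul_pos hε artin_pos)
    ({2, ℓ} ∪ {q₀}) (by
      intro p hp
      rcases Finset.mem_union.1 hp with hp | hp
      · rcases Finset.mem_insert.1 hp with rfl | hp
        · exact Nat.prime_two
        · rw [Finset.mem_singleton.1 hp]; exact hℓ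
      · rw [Finset.mem_singleton.1 hp]; exact hq0)
  have h2s : 2 ∈ s := hms (by simp)
  have hls : ℓ ∈ s := hms (by simp)
  have hq₀s : q₀ ∈ s := hms (by simp)
  set t := (s.erase 2).erase ℓ with htdef
  have htp : ∀ p ∈ t, p.Prime := fun p hp =>
    hsp p (Finset.mem_of_mem_erase (Finset.mem_of_mem_erase hp))
  have h2t : 2 ∉ t := fun h => (Finset.mem_erase.1 (Finset.mem_of_mem_erase h)).1 rfl
  have hlt : ℓ ∉ t := fun h => (Finset.mem_erase.1 h).1 rfl
  have hq₀t : q₀ ∈ t :=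
    Finset.mem_erase.2 ⟨hq₀ℓ, Finset.mem_erase.2 ⟨hq₀2, hq₀s⟩⟩
  have htm : ∀ p ∈ t, ¬ p ∣ 4 := by
    intro p hp hdvd
    exact h2t (prime_dvd_four (htp p hp) hdvd ▸ hp)
  obtain ⟨a, ha1, halt, hacop, ham, hap, hgcd⟩ :=
    construct 4 1 (by norm_num) (by norm_num) (by norm_num) (by norm_num) t htp htm h2t
      ⟨q₀, hq₀t⟩
  set d := 4 * ∏ p ∈ t, p with hddef
  have hP0 : (∏ p ∈ t, p) ≠ 0 := (Finset.prod_pos (fun p hp => (htp p hp).pos)).ne'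
  have hd0 : d ≠ 0 := by positivity
  have hpfd : d.primeFactors = insert 2 t := by
    rw [pf_mul_prod 4 (by norm_num) t htp, pf_four, (Finset.insert_eq 2 t).symm]
  have h4dd : 4 ∣ d := dvd_mul_right 4 _
  have hld : ¬ ℓ ∣ d := by
    apply not_dvd_of_not_mem_pf hℓ hd0
    rw [hpfd]
    intro h
    rcases Finset.mem_insert.1 h with h | h
    · exact hℓ2 h
    · exact hlt h
  refine ⟨a, d, ha1, halt, hacop, hld, h4dd, ham, ?_⟩
  -- gden = 1/2
  have hpfgcd : (Nat.gcd (a - 1) d).primeFactors = {2} := by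
    ext q
    rw [hgcd q, Finset.mem_singleton]
    constructor
    · rintro ⟨hq, hq4, -⟩
      exact prime_dvd_four hq hq4
    · rintro rfl
      exact ⟨Nat.prime_two, by norm_num, by omega⟩
  have hgden : gden a d = 1 / 2 := by
    unfold gden
    rw [hpfgcd, Finset.prod_singleton]
    norm_num
  have hc : cGen ℓ d a = (fpr ℓ)⁻¹ := by
    unfold cGen
    rw [if_neg (fun h => h.2 h4dd), if_pos ⟨hld, h4dd, ham⟩]
    exact cII_eq hℓ
  have ht_pos : 0 < ∏ p ∈ t, fpr p := prod_fpr_pos t htp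
  have hfl : 0 < fpr ℓ := fpr_pos hℓ
  have hsplit : ∏ p ∈ s, fpr p = fpr 2 * (fpr ℓ * ∏ p ∈ t, fpr p) :=
    prod_rebuild h2s hls (fun h => hℓ2 h) fpr
  have hδ : deltaDA ℓ d a = (1 / 2) * (artinConstant / ∏ p ∈ s, fpr p) := by
    rw [delta_eq, hc, hgden, gpart_eq, hpfd, Finset.prod_insert h2t, hsplit, fpr_two]
    field_simp
  exact sharp_end (by norm_num) (by norm_num) hε (artin_le s hsp) hFs hδ

lemma exists_nonres {ℓ : ℕ} (hℓ : ℓ.Prime) (hodd : Odd ℓ) :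
    ∃ b : ℕ, 2 ≤ b ∧ b < ℓ ∧ jacobiSym (b : ℤ) ℓ = -1 := by
  haveI : Fact ℓ.Prime := ⟨hℓ⟩
  have hℓ2 : ℓ ≠ 2 := by rintro rfl; exact (Nat.not_odd_iff_even.2 (by decide)) hodd
  have hchar : ringChar (ZMod ℓ) ≠ 2 := by
    rw [ZMod.ringChar_zmod_n]; exact hℓ2
  obtain ⟨x, hx⟩ := FiniteField.exists_nonsquare hchar
  have hval : ((x.val : ℕ) : ZMod ℓ) = x := ZMod.natCast_rightInverse x
  have hx0 : x ≠ 0 := fun h => hx (h ▸ ⟨0, (mul_zero 0).symm⟩)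
  have hx1 : x ≠ 1 := fun h => hx (h ▸ IsSquare.one)
  have hv0 : x.val ≠ 0 := fun h => hx0 (by rw [← hval, h, Nat.cast_zero])
  have hv1 : x.val ≠ 1 := fun h => hx1 (by rw [← hval, h, Nat.cast_one])
  refine ⟨x.val, by omega, ZMod.val_lt x, ?_⟩
  rw [ZMod.nonsquare_iff_jacobiSym_eq_neg_one]
  intro h
  apply hx
  rwa [show (((x.val : ℤ)) : ZMod ℓ) = x by push_cast [hval]; rfl] at h

theorem sharp_III (ε : ℝ) (hε : 0 < ε) :
    ∃ a d : ℕ, 1 ≤ a ∧ a < d ∧ Nat.Coprime a d ∧ 3 ∣ d ∧ ¬ 4 ∣ d ∧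
      a % 3 = 1 ∧ 1 / 3 - ε < deltaDA 3 d a := by
  obtain ⟨s, hsp, hms, hFs⟩ := exists_good (mul_pos hε artin_pos) {2, 3, 5} (by
    intro p hp
    fin_cases hp <;> norm_num)
  have h2s : 2 ∈ s := hms (by simp)
  have h3s : 3 ∈ s := hms (by simp)
  have h5s : 5 ∈ s := hms (by simp)
  set t := (s.erase 2).erase 3 with htdef
  have htp : ∀ p ∈ t, p.Prime := fun p hp =>
    hsp p (Finset.mem_of_mem_erase (Finset.mem_of_mem_erase hp))
  have h2t : 2 ∉ t := fun h => (Finset.mem_erase.1 (Finset.mem_of_mem_erase h)).1 rfl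
  have h3t : 3 ∉ t := fun h => (Finset.mem_erase.1 h).1 rfl
  have h5t : 5 ∈ t := Finset.mem_erase.2 ⟨by norm_num, Finset.mem_erase.2 ⟨by norm_num, h5s⟩⟩
  have htm : ∀ p ∈ t, ¬ p ∣ 6 := by
    intro p hp hdvd
    rcases prime_dvd_six (htp p hp) hdvd with rfl | rfl
    · exact h2t hp
    · exact h3t hp
  obtain ⟨a, ha1, halt, hacop, ham, hap, hgcd⟩ :=
    construct 6 1 (by norm_num) (by norm_num) (by norm_num) (Nat.coprime_one_left 6)
      t htp htm h2t ⟨5, h5t⟩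
  set d := 6 * ∏ p ∈ t, p with hddef
  have hP0 : (∏ p ∈ t, p) ≠ 0 := (Finset.prod_pos (fun p hp => (htp p hp).pos)).ne'
  have hd0 : d ≠ 0 := by positivity
  have hpfd : d.primeFactors = insert 2 (insert 3 t) := by
    rw [pf_mul_prod 6 (by norm_num) t htp, pf_six]
    ext q; simp [Finset.mem_insert, or_assoc]
  have h3dd : 3 ∣ d := Dvd.dvd.mul_right (by norm_num) _
  have hPodd : (∏ p ∈ t, p) % 2 = 1 := by
    have := prime_not_dvd_prod Nat.prime_two t htp h2t
    omega
  have h4d : ¬ 4 ∣ d := by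
    have hdm : d = 6 * ∏ p ∈ t, p := hddef
    omega
  have ha3 : a % 3 = 1 := by omega
  have ha2 : a % 2 = 1 := by omega
  refine ⟨a, d, ha1, halt, hacop, h3dd, h4d, ha3, ?_⟩
  have hj : jacobiSym (a : ℤ) 3 = 1 := by
    rw [jacobiSym.mod_left]
    have hmod : (a : ℤ) % ((3:ℕ):ℤ) = 1 := by
      have := congrArg (Nat.cast : ℕ → ℤ) ha3
      push_cast at this
      omega
    rw [hmod]
    exact jacobiSym.one_left 3
  have hc : cGen 3 d a = 1 := by
    unfold cGen
    rw [if_neg (fun h => h.1 h3dd), if_neg (fun h => h.1 h3dd), if_pos ⟨h3dd, h4d, hj⟩]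
  have hpfgcd : (Nat.gcd (a - 1) d).primeFactors = {2, 3} := by
    ext q
    rw [hgcd q]
    constructor
    · rintro ⟨hq, hq6, -⟩
      rcases prime_dvd_six hq hq6 with rfl | rfl <;> simp
    · intro hq
      rcases Finset.mem_insert.1 hq with rfl | hq
      · exact ⟨Nat.prime_two, by norm_num, by omega⟩
      · rw [Finset.mem_singleton.1 hq]
        exact ⟨Nat.prime_three, by norm_num, by omega⟩
  have hgden : gden a d = 1 / 3 := by
    unfold gden
    rw [hpfgcd, Finset.prod_insert (by norm_num), Finset.prod_singleton]
    norm_num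
  have ht_pos : 0 < ∏ p ∈ t, fpr p := prod_fpr_pos t htp
  have hf3 : 0 < fpr 3 := fpr_pos Nat.prime_three
  have hsplit : ∏ p ∈ s, fpr p = fpr 2 * (fpr 3 * ∏ p ∈ t, fpr p) :=
    prod_rebuild h2s h3s (by norm_num) fpr
  have hδ : deltaDA 3 d a = (1 / 3) * (artinConstant / ∏ p ∈ s, fpr p) := by
    rw [delta_eq, hc, hgden, gpart_eq, hpfd,
      Finset.prod_insert (by simp [h2t]), Finset.prod_insert h3t, hsplit, fpr_two]
    field_simp
    try ring
  exact sharp_end (by norm_num) (by norm_num) hε (artin_le s hsp) hFs hδ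

theorem sharp_IV (ℓ : ℕ) (hℓ : ℓ.Prime) (hodd : Odd ℓ) (hl3 : 3 < ℓ) (ε : ℝ) (hε : 0 < ε) :
    ∃ a d : ℕ, 1 ≤ a ∧ a < d ∧ Nat.Coprime a d ∧ ℓ ∣ d ∧ ¬ 4 ∣ d ∧
      jacobiSym (a : ℤ) ℓ = 1 ∧ 1 / 2 - ε < deltaDA ℓ d a := by
  have hℓ2 : ℓ ≠ 2 := by omega
  have hℓ4 : ℓ ≠ 4 := fun h => by rw [h] at hℓ; norm_num at hℓ
  have hℓ5 : 5 ≤ ℓ := by omega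
  have hlodd : ℓ % 2 = 1 := Nat.odd_iff.1 hodd
  obtain ⟨s, hsp, hms, hFs⟩ := exists_good (mul_pos hε artin_pos) {2, 3, ℓ} (by
    intro p hp
    rcases Finset.mem_insert.1 hp with rfl | hp
    · exact Nat.prime_two
    rcases Finset.mem_insert.1 hp with rfl | hp
    · exact Nat.prime_three
    · rw [Finset.mem_singleton.1 hp]; exact hℓ)
  have h2s : 2 ∈ s := hms (by simp)
  have h3s : 3 ∈ s := hms (by simp)
  have hls : ℓ ∈ s := hms (by simp)
  set t := (s.erase 2).erase ℓ with htdef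
  have htp : ∀ p ∈ t, p.Prime := fun p hp =>
    hsp p (Finset.mem_of_mem_erase (Finset.mem_of_mem_erase hp))
  have h2t : 2 ∉ t := fun h => (Finset.mem_erase.1 (Finset.mem_of_mem_erase h)).1 rfl
  have hlt : ℓ ∉ t := fun h => (Finset.mem_erase.1 h).1 rfl
  have h3t : 3 ∈ t := Finset.mem_erase.2 ⟨by omega, Finset.mem_erase.2 ⟨by norm_num, h3s⟩⟩
  have htm : ∀ p ∈ t, ¬ p ∣ 2 * ℓ := by
    intro p hp hdvd
    rcases (Nat.Prime.dvd_mul (htp p hp)).1 hdvd with h | h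
    · exact h2t (((Nat.prime_dvd_prime_iff_eq (htp p hp) Nat.prime_two).1 h) ▸ hp)
    · exact hlt (((Nat.prime_dvd_prime_iff_eq (htp p hp) hℓ).1 h) ▸ hp)
  have hrcop : Nat.Coprime (ℓ + 4) (2 * ℓ) := by
    apply Nat.Coprime.mul_right
    · have : ¬ 2 ∣ (ℓ + 4) := by omega
      exact ((Nat.prime_two.coprime_iff_not_dvd).2 this).symm
    · have : ¬ ℓ ∣ (ℓ + 4) := by
        intro h
        have h4 : ℓ ∣ 4 := (Nat.dvd_add_right (dvd_refl ℓ)).1 h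
        have := Nat.le_of_dvd (by norm_num) h4
        omega
      exact ((hℓ.coprime_iff_not_dvd).2 this).symm
  obtain ⟨a, ha1, halt, hacop, ham, hap, hgcd⟩ :=
    construct (2 * ℓ) (ℓ + 4) (by omega) (by omega) (by omega) hrcop t htp htm h2t ⟨3, h3t⟩
  set d := (2 * ℓ) * ∏ p ∈ t, p with hddef
  have hP0 : (∏ p ∈ t, p) ≠ 0 := (Finset.prod_pos (fun p hp => (htp p hp).pos)).ne'
  have hd0 : d ≠ 0 := by
    simp only [hddef]
    positivity
  have hpfd : d.primeFactors = insert 2 (insert ℓ t) := by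
    rw [pf_mul_prod (2 * ℓ) (by omega) t htp, pf_two_ell hℓ hℓ2]
    ext q; simp [Finset.mem_insert, or_assoc]
  have hldd : ℓ ∣ d := Dvd.dvd.mul_right (dvd_mul_left ℓ 2) _
  have hPodd : (∏ p ∈ t, p) % 2 = 1 := by
    have := prime_not_dvd_prod Nat.prime_two t htp h2t
    omega
  have h4d : ¬ 4 ∣ d := by
    have hm : (ℓ * ∏ p ∈ t, p) % 2 = 1 := by
      rcases Nat.even_or_odd (ℓ * ∏ p ∈ t, p) with h | h
      · exfalso
        rcases (Nat.even_mul.1 h) with h' | h'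
        · have := Nat.even_iff.1 h'; omega
        · have := Nat.even_iff.1 h'; omega
      · exact Nat.odd_iff.1 h
    have hdm : d = 2 * (ℓ * ∏ p ∈ t, p) := by rw [hddef]; ring
    omega
  have hal : a % ℓ = 4 := by
    have h1 : a % ℓ = a % (2 * ℓ) % ℓ := (Nat.mod_mod_of_dvd a (dvd_mul_left ℓ 2)).symm
    rw [h1, ham, Nat.add_mod_left, Nat.mod_eq_of_lt (by omega)]
  have ha2 : a % 2 = 1 := by
    have h1 : a % 2 = a % (2 * ℓ) % 2 := (Nat.mod_mod_of_dvd a (dvd_mul_right 2 ℓ)).symm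
    rw [h1, ham]
    omega
  have hj : jacobiSym (a : ℤ) ℓ = 1 := by
    have hmodint : (a : ℤ) % (ℓ:ℕ) = (4 : ℤ) % (ℓ:ℕ) := by
      have h1 := congrArg (Nat.cast : ℕ → ℤ) hal
      push_cast at h1 ⊢
      have h2 : (4:ℤ) % (ℓ:ℤ) = 4 :=
        Int.emod_eq_of_lt (by norm_num) (by exact_mod_cast (show (4:ℕ) < ℓ by omega))
      rw [h2]
      exact h1
    rw [jacobiSym.mod_left' hmodint]
    rw [show (4:ℤ) = 2 ^ 2 by norm_num]
    apply jacobiSym.sq_one'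
    have hc2 : Nat.Coprime 2 ℓ := (Nat.prime_two.coprime_iff_not_dvd).2 (by omega)
    have hg : Int.gcd 2 (ℓ:ℤ) = Nat.gcd 2 ℓ := by
      rw [show (2:ℤ) = ((2:ℕ):ℤ) by norm_num, Int.gcd_natCast_natCast]
    rw [hg]
    exact hc2
  refine ⟨a, d, ha1, halt, hacop, hldd, h4d, hj, ?_⟩
  have hc : cGen ℓ d a = 1 := by
    unfold cGen
    rw [if_neg (fun h => h.1 hldd), if_neg (fun h => h.1 hldd), if_pos ⟨hldd, h4d, hj⟩]
  have hpfgcd : (Nat.gcd (a - 1) d).primeFactors = {2} := by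
    ext q
    rw [hgcd q, Finset.mem_singleton]
    constructor
    · rintro ⟨hq, hq2l, hqa⟩
      rcases (Nat.Prime.dvd_mul hq).1 hq2l with h | h
      · exact (Nat.prime_dvd_prime_iff_eq hq Nat.prime_two).1 h
      · exfalso
        have : q = ℓ := (Nat.prime_dvd_prime_iff_eq hq hℓ).1 h
        subst this
        exact not_dvd_sub_one hal (by norm_num) (by omega) hqa
    · rintro rfl
      exact ⟨Nat.prime_two, dvd_mul_right 2 ℓ, by omega⟩
  have hgden : gden a d = 1 / 2 := by
    unfold gden
    rw [hpfgcd, Finset.prod_singleton]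
    norm_num
  have ht_pos : 0 < ∏ p ∈ t, fpr p := prod_fpr_pos t htp
  have hfl : 0 < fpr ℓ := fpr_pos hℓ
  have hsplit : ∏ p ∈ s, fpr p = fpr 2 * (fpr ℓ * ∏ p ∈ t, fpr p) :=
    prod_rebuild h2s hls hℓ2 fpr
  have hδ : deltaDA ℓ d a = (1 / 2) * (artinConstant / ∏ p ∈ s, fpr p) := by
    rw [delta_eq, hc, hgden, gpart_eq, hpfd,
      Finset.prod_insert (by simp [h2t, Ne.symm hℓ2]), Finset.prod_insert hlt,
      hsplit, fpr_two]
    field_simp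
    try ring
  exact sharp_end (by norm_num) (by norm_num) hε (artin_le s hsp) hFs hδ

theorem sharp_V (ℓ : ℕ) (hℓ : ℓ.Prime) (hodd : Odd ℓ) (ε : ℝ) (hε : 0 < ε) :
    ∃ a d : ℕ, 1 ≤ a ∧ a < d ∧ Nat.Coprime a d ∧ 4 ∣ d ∧ a % 4 = 3 ∧
      1 - ε < deltaDA ℓ d a := by
  obtain ⟨s, hsp, hms, hFs⟩ := exists_good (mul_pos hε artin_pos) {2, 3} (by
    intro p hp
    rcases Finset.mem_insert.1 hp with rfl | hp
    · exact Nat.prime_two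
    · rw [Finset.mem_singleton.1 hp]; exact Nat.prime_three)
  have h2s : 2 ∈ s := hms (by simp)
  have h3s : 3 ∈ s := hms (by simp)
  set t := s.erase 2 with htdef
  have htp : ∀ p ∈ t, p.Prime := fun p hp => hsp p (Finset.mem_of_mem_erase hp)
  have h2t : 2 ∉ t := fun h => (Finset.mem_erase.1 h).1 rfl
  have h3t : 3 ∈ t := Finset.mem_erase.2 ⟨by norm_num, h3s⟩
  have htm : ∀ p ∈ t, ¬ p ∣ 4 := by
    intro p hp hdvd
    exact h2t (prime_dvd_four (htp p hp) hdvd ▸ hp)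
  obtain ⟨a, ha1, halt, hacop, ham, hap, hgcd⟩ :=
    construct 4 3 (by norm_num) (by norm_num) (by norm_num) (by decide) t htp htm h2t
      ⟨3, h3t⟩
  set d := 4 * ∏ p ∈ t, p with hddef
  have hP0 : (∏ p ∈ t, p) ≠ 0 := (Finset.prod_pos (fun p hp => (htp p hp).pos)).ne'
  have hd0 : d ≠ 0 := by positivity
  have hpfd : d.primeFactors = s := by
    rw [pf_mul_prod 4 (by norm_num) t htp, pf_four, (Finset.insert_eq 2 t).symm, htdef,
      Finset.insert_erase h2s]
  have h4dd : 4 ∣ d := dvd_mul_right 4 _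
  refine ⟨a, d, ha1, halt, hacop, h4dd, ham, ?_⟩
  have hc : cGen ℓ d a = 2 := by
    unfold cGen
    rw [if_neg (fun h => h.2 h4dd), if_neg (by rintro ⟨-, -, h⟩; omega),
      if_neg (fun h => h.2.1 h4dd), if_pos (Or.inl ⟨h4dd, ham⟩)]
  have hpfgcd : (Nat.gcd (a - 1) d).primeFactors = {2} := by
    ext q
    rw [hgcd q, Finset.mem_singleton]
    constructor
    · rintro ⟨hq, hq4, -⟩
      exact prime_dvd_four hq hq4
    · rintro rfl
      exact ⟨Nat.prime_two, by norm_num, by omega⟩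
  have hgden : gden a d = 1 / 2 := by
    unfold gden
    rw [hpfgcd, Finset.prod_singleton]
    norm_num
  have hs_pos : 0 < ∏ p ∈ s, fpr p := prod_fpr_pos s hsp
  have hδ : deltaDA ℓ d a = 1 * (artinConstant / ∏ p ∈ s, fpr p) := by
    rw [delta_eq, hc, hgden, gpart_eq, hpfd]
    field_simp
  exact sharp_end (by norm_num) (by norm_num) hε (artin_le s hsp) hFs hδ

theorem sharp_VI (ℓ : ℕ) (hℓ : ℓ.Prime) (hodd : Odd ℓ) (ε : ℝ) (hε : 0 < ε) :
    ∃ a d : ℕ, 1 ≤ a ∧ a < d ∧ Nat.Coprime a d ∧ ℓ ∣ d ∧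
      jacobiSym (a : ℤ) ℓ = -1 ∧ 1 - ε < deltaDA ℓ d a := by
  have hℓ2 : ℓ ≠ 2 := by rintro rfl; exact (Nat.not_odd_iff_even.2 (by decide)) hodd
  have hℓ3 : 3 ≤ ℓ := by have := hℓ.two_le; omega
  have hlodd : ℓ % 2 = 1 := Nat.odd_iff.1 hodd
  obtain ⟨b, hb2, hbl, hjb⟩ := exists_nonres hℓ hodd
  have hq0 : (if ℓ = 3 then 5 else 3).Prime := by split <;> norm_num
  set q₀ := if ℓ = 3 then 5 else 3 with hq₀def
  have hq₀2 : q₀ ≠ 2 := by rw [hq₀def]; split <;> norm_num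
  have hq₀ℓ : q₀ ≠ ℓ := by rw [hq₀def]; split <;> omega
  obtain ⟨s, hsp, hms, hFs⟩ := exists_good (mul_pos hε artin_pos)
    ({2, ℓ} ∪ {q₀}) (by
      intro p hp
      rcases Finset.mem_union.1 hp with hp | hp
      · rcases Finset.mem_insert.1 hp with rfl | hp
        · exact Nat.prime_two
        · rw [Finset.mem_singleton.1 hp]; exact hℓ
      · rw [Finset.mem_singleton.1 hp]; exact hq0)
  have h2s : 2 ∈ s := hms (by simp)
  have hls : ℓ ∈ s := hms (by simp)
  have hq₀s : q₀ ∈ s := hms (by simp)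
  set t := (s.erase 2).erase ℓ with htdef
  have htp : ∀ p ∈ t, p.Prime := fun p hp =>
    hsp p (Finset.mem_of_mem_erase (Finset.mem_of_mem_erase hp))
  have h2t : 2 ∉ t := fun h => (Finset.mem_erase.1 (Finset.mem_of_mem_erase h)).1 rfl
  have hlt : ℓ ∉ t := fun h => (Finset.mem_erase.1 h).1 rfl
  have hq₀t : q₀ ∈ t := Finset.mem_erase.2 ⟨hq₀ℓ, Finset.mem_erase.2 ⟨hq₀2, hq₀s⟩⟩
  have htm : ∀ p ∈ t, ¬ p ∣ 2 * ℓ := by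
    intro p hp hdvd
    rcases (Nat.Prime.dvd_mul (htp p hp)).1 hdvd with h | h
    · exact h2t (((Nat.prime_dvd_prime_iff_eq (htp p hp) Nat.prime_two).1 h) ▸ hp)
    · exact hlt (((Nat.prime_dvd_prime_iff_eq (htp p hp) hℓ).1 h) ▸ hp)
  set r := if b % 2 = 1 then b else b + ℓ with hrdef
  have hr2 : r % 2 = 1 := by rw [hrdef]; split_ifs with h <;> omega
  have hrl : r % ℓ = b := by
    rw [hrdef]; split_ifs with h
    · exact Nat.mod_eq_of_lt hbl
    · rw [Nat.add_mod_right, Nat.mod_eq_of_lt hbl]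
  have hrm : r < 2 * ℓ := by rw [hrdef]; split_ifs with h <;> omega
  have hr0 : r ≠ 0 := by rw [hrdef]; split_ifs with h <;> omega
  have hrcop : Nat.Coprime r (2 * ℓ) := by
    apply Nat.Coprime.mul_right
    · exact ((Nat.prime_two.coprime_iff_not_dvd).2 (by omega)).symm
    · have : ¬ ℓ ∣ r := by
        intro h
        have := Nat.dvd_iff_mod_eq_zero.1 h
        omega
      exact ((hℓ.coprime_iff_not_dvd).2 this).symm
  obtain ⟨a, ha1, halt, hacop, ham, hap, hgcd⟩ :=
    construct (2 * ℓ) r (by omega) hr0 hrm hrcop t htp htm h2t ⟨q₀, hq₀t⟩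
  set d := (2 * ℓ) * ∏ p ∈ t, p with hddef
  have hP0 : (∏ p ∈ t, p) ≠ 0 := (Finset.prod_pos (fun p hp => (htp p hp).pos)).ne'
  have hd0 : d ≠ 0 := by
    simp only [hddef]
    positivity
  have hpfd : d.primeFactors = insert 2 (insert ℓ t) := by
    rw [pf_mul_prod (2 * ℓ) (by omega) t htp, pf_two_ell hℓ hℓ2]
    ext q; simp [Finset.mem_insert, or_assoc]
  have hldd : ℓ ∣ d := Dvd.dvd.mul_right (dvd_mul_left ℓ 2) _
  have hal : a % ℓ = b := by
    have h1 : a % ℓ = a % (2 * ℓ) % ℓ := (Nat.mod_mod_of_dvd a (dvd_mul_left ℓ 2)).symm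
    rw [h1, ham, hrl]
  have ha2 : a % 2 = 1 := by
    have h1 : a % 2 = a % (2 * ℓ) % 2 := (Nat.mod_mod_of_dvd a (dvd_mul_right 2 ℓ)).symm
    rw [h1, ham]
    omega
  have hj : jacobiSym (a : ℤ) ℓ = -1 := by
    have hmint : (a : ℤ) % (ℓ:ℕ) = (b : ℤ) % (ℓ:ℕ) := by
      have h1 := congrArg (Nat.cast : ℕ → ℤ) hal
      push_cast at h1 ⊢
      have h2 : (b:ℤ) % (ℓ:ℤ) = b := Int.emod_eq_of_lt (by positivity)
        (by exact_mod_cast hbl)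
      rw [h2]
      exact h1
    rw [jacobiSym.mod_left' hmint]
    exact hjb
  refine ⟨a, d, ha1, halt, hacop, hldd, hj, ?_⟩
  have hjne1 : jacobiSym (a : ℤ) ℓ ≠ 1 := by rw [hj]; norm_num
  have hc : cGen ℓ d a = 2 := by
    unfold cGen
    rw [if_neg (fun h => h.1 hldd), if_neg (fun h => h.1 hldd),
      if_neg (fun h => hjne1 h.2.2), if_pos (Or.inr ⟨hldd, hj⟩)]
  have hpfgcd : (Nat.gcd (a - 1) d).primeFactors = {2} := by
    ext q
    rw [hgcd q, Finset.mem_singleton]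
    constructor
    · rintro ⟨hq, hq2l, hqa⟩
      rcases (Nat.Prime.dvd_mul hq).1 hq2l with h | h
      · exact (Nat.prime_dvd_prime_iff_eq hq Nat.prime_two).1 h
      · exfalso
        have : q = ℓ := (Nat.prime_dvd_prime_iff_eq hq hℓ).1 h
        subst this
        exact not_dvd_sub_one hal hb2 hbl hqa
    · rintro rfl
      exact ⟨Nat.prime_two, dvd_mul_right 2 ℓ, by omega⟩
  have hgden : gden a d = 1 / 2 := by
    unfold gden
    rw [hpfgcd, Finset.prod_singleton]
    norm_num
  have ht_pos : 0 < ∏ p ∈ t, fpr p := prod_fpr_pos t htp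
  have hfl : 0 < fpr ℓ := fpr_pos hℓ
  have hsplit : ∏ p ∈ s, fpr p = fpr 2 * (fpr ℓ * ∏ p ∈ t, fpr p) :=
    prod_rebuild h2s hls hℓ2 fpr
  have hδ : deltaDA ℓ d a = 1 * (artinConstant / ∏ p ∈ s, fpr p) := by
    rw [delta_eq, hc, hgden, gpart_eq, hpfd,
      Finset.prod_insert (by simp [h2t, Ne.symm hℓ2]), Finset.prod_insert hlt,
      hsplit, fpr_two]
    field_simp
    try ring
  exact sharp_end (by norm_num) (by norm_num) hε (artin_le s hsp) hFs hδ

end ArtinInfra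

/-- Extremal behavior of `δ_{d,a}` (Proposition `casesbounds`): for an odd
prime `ℓ` and coprime `1 ≤ a < d`, the stated strict upper bounds hold in the
six cases, `δ_{d,a} = 0` in the remaining case, and each bound is sharp: for
every `ε > 0` there are coprime `1 ≤ a < d` in the given case with `δ_{d,a}`
exceeding the bound minus `ε`. -/
theorem deltaDA_bounds (ℓ : ℕ) (hℓ : ℓ.Prime) (hodd : Odd ℓ) :
    (∀ a d : ℕ, 1 ≤ a → a < d → Nat.Coprime a d →
      (¬ ℓ ∣ d → ¬ 4 ∣ d →
        deltaDA ℓ d a < (3 - 2 / ((ℓ : ℝ) * ((ℓ : ℝ) - 1))) / 4) ∧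
      (¬ ℓ ∣ d → 4 ∣ d → a % 4 = 1 → deltaDA ℓ d a < 1 / 2) ∧
      (ℓ = 3 → 3 ∣ d → ¬ 4 ∣ d → a % 3 = 1 → deltaDA ℓ d a < 1 / 3) ∧
      (ℓ ∣ d → 3 < ℓ → ¬ 4 ∣ d → jacobiSym (a : ℤ) ℓ = 1 →
        deltaDA ℓ d a < 1 / 2) ∧
      (4 ∣ d → a % 4 = 3 → deltaDA ℓ d a < 1) ∧
      (ℓ ∣ d → jacobiSym (a : ℤ) ℓ = -1 → deltaDA ℓ d a < 1) ∧
      (4 * ℓ ∣ d → jacobiSym (a : ℤ) ℓ = 1 → a % 4 = 1 → deltaDA ℓ d a = 0)) ∧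
    (∀ ε : ℝ, 0 < ε →
      (∃ a d : ℕ, 1 ≤ a ∧ a < d ∧ Nat.Coprime a d ∧ ¬ ℓ ∣ d ∧ ¬ 4 ∣ d ∧
        (3 - 2 / ((ℓ : ℝ) * ((ℓ : ℝ) - 1))) / 4 - ε < deltaDA ℓ d a) ∧
      (∃ a d : ℕ, 1 ≤ a ∧ a < d ∧ Nat.Coprime a d ∧ ¬ ℓ ∣ d ∧ 4 ∣ d ∧
        a % 4 = 1 ∧ 1 / 2 - ε < deltaDA ℓ d a) ∧
      (ℓ = 3 → ∃ a d : ℕ, 1 ≤ a ∧ a < d ∧ Nat.Coprime a d ∧ 3 ∣ d ∧ ¬ 4 ∣ d ∧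
        a % 3 = 1 ∧ 1 / 3 - ε < deltaDA ℓ d a) ∧
      (3 < ℓ → ∃ a d : ℕ, 1 ≤ a ∧ a < d ∧ Nat.Coprime a d ∧ ℓ ∣ d ∧ ¬ 4 ∣ d ∧
        jacobiSym (a : ℤ) ℓ = 1 ∧ 1 / 2 - ε < deltaDA ℓ d a) ∧
      (∃ a d : ℕ, 1 ≤ a ∧ a < d ∧ Nat.Coprime a d ∧ 4 ∣ d ∧ a % 4 = 3 ∧
        1 - ε < deltaDA ℓ d a) ∧
      (∃ a d : ℕ, 1 ≤ a ∧ a < d ∧ Nat.Coprime a d ∧ ℓ ∣ d ∧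
        jacobiSym (a : ℤ) ℓ = -1 ∧ 1 - ε < deltaDA ℓ d a)) := by
  constructor
  · intro a d ha had hcop
    exact upper_all ℓ hℓ hodd a d ha had hcop
  · intro ε hε
    refine ⟨sharp_I ℓ hℓ hodd ε hε, sharp_II ℓ hℓ hodd ε hε, ?_,
      fun h3 => sharp_IV ℓ hℓ hodd h3 ε hε, sharp_V ℓ hℓ hodd ε hε, sharp_VI ℓ hℓ hodd ε hε⟩
    intro h3
    subst h3
    exact sharp_III ε hε
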